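/- arXiv:1904.09451 — 2 statements merged into one kernel-verified Lean document; each statement's English description precedes it below -/
import Mathlib

section
/- Let d ≥ 2, let {φ_x : x∈Ω} and {ψ_y : y∈Ω} be two mutually unbiased bases of a d-dimensional complex Hilbert space H with |Ω| = d, and let λ ∈ [1/(1−d), 1]. Denote by A_λ(x)^{1/2} the unique positive semidefinite square root of A_λ(x). Then A_λ(x)^{1/2} = u_λ·A(x) + (v_λ/√d)·1 for every x ∈ Ω, and the map C(x,y) = A_λ(x)^{1/2} B(y) A_λ(x)^{1/2} is a joint observable of A_λ and B_{γ_λ}; in particular, its second margin satisfies ∑_{x∈Ω} A_λ(x)^{1/2} B(y) A_λ(x)^{1/2} = B_{γ_λ}(y) for all y ∈ Ω. -/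
open scoped InnerProductSpace

noncomputable section

/-- An observable with outcome set `Ω`: positive semidefinite operators summing to `1`. -/
def IsObservable {Ω H : Type*} [Fintype Ω] [NormedAddCommGroup H] [InnerProductSpace ℂ H]
    [CompleteSpace H] (A : Ω → H →L[ℂ] H) : Prop :=
  (∀ x, (A x).IsPositive) ∧ (∑ x, A x) = 1

/-- `C` is a joint observable of `A` and `B`. -/
def IsJointObservable {Ω H : Type*} [Fintype Ω] [NormedAddCommGroup H] [InnerProductSpace ℂ H]
    [CompleteSpace H] (C : Ω × Ω → H →L[ℂ] H) (A B : Ω → H →L[ℂ] H) : Prop :=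
  IsObservable C ∧ (∀ x, (∑ y, C (x, y)) = A x) ∧ (∀ y, (∑ x, C (x, y)) = B y)

/-- The set of all compatible pairs of observables. -/
def CO (Ω H : Type*) [Fintype Ω] [NormedAddCommGroup H] [InnerProductSpace ℂ H]
    [CompleteSpace H] : Set ((Ω → H →L[ℂ] H) × (Ω → H →L[ℂ] H)) :=
  {AB | ∃ C, IsJointObservable C AB.1 AB.2}

/-- The rank-one operator `|φ⟩⟨φ|`. -/
def outer {H : Type*} [NormedAddCommGroup H] [InnerProductSpace ℂ H] (φ : H) : H →L[ℂ] H :=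
  (innerSL ℂ φ).smulRight φ

/-- The constant `u_ν = (1/√d)·(√(1+(d−1)ν) − √(1−ν))`. -/
def uConst (d : ℕ) (ν : ℝ) : ℝ :=
  (1 / Real.sqrt d) * (Real.sqrt (1 + ((d : ℝ) - 1) * ν) - Real.sqrt (1 - ν))

/-- The constant `v_ν = √(1−ν)`. -/
def vConst (ν : ℝ) : ℝ := Real.sqrt (1 - ν)

/-- The constant `γ_ν = (1/d)·[(d−2)(1−ν) + 2·√(1−ν)·√(1+(d−1)ν)]`. -/
def gammaConst (d : ℕ) (ν : ℝ) : ℝ :=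
  (1 / (d : ℝ)) * (((d : ℝ) - 2) * (1 - ν)
    + 2 * Real.sqrt (1 - ν) * Real.sqrt (1 + ((d : ℝ) - 1) * ν))


section Aux

variable {H : Type*} [NormedAddCommGroup H] [InnerProductSpace ℂ H] [FiniteDimensional ℂ H]

omit [FiniteDimensional ℂ H] in
lemma outer_apply (a z : H) : outer a z = ⟪a, z⟫_ℂ • a := rfl

omit [FiniteDimensional ℂ H] in
lemma outer_mul_outer (a b : H) (z : H) : (outer a * outer b) z = (⟪a, b⟫_ℂ * ⟪b, z⟫_ℂ) • a := by
  simp [outer_apply, ContinuousLinearMap.mul_apply, inner_smul_right, smul_smul, mul_comm]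

omit [FiniteDimensional ℂ H] in
lemma outer_sq (a : H) (ha : ⟪a, a⟫_ℂ = 1) : outer a * outer a = outer a := by
  ext z
  rw [outer_mul_outer, ha, one_mul, outer_apply]

omit [FiniteDimensional ℂ H] in
lemma outer_conj_outer (a b : H) :
    outer a * outer b * outer a = (⟪a, b⟫_ℂ * ⟪b, a⟫_ℂ) • outer a := by
  ext z
  simp only [ContinuousLinearMap.mul_apply, ContinuousLinearMap.smul_apply, outer_apply,
    inner_smul_right, smul_smul]
  ring_nf

omit [FiniteDimensional ℂ H] in
lemma sum_outer_eq_one {Ω : Type*} [Fintype Ω] (φ : OrthonormalBasis Ω ℂ H) :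
    (∑ x, outer (φ x)) = 1 := by
  ext z
  simp only [ContinuousLinearMap.sum_apply, outer_apply, ContinuousLinearMap.one_apply]
  exact φ.sum_repr' z

lemma outer_isPositive (a : H) : (outer a).IsPositive := by
  constructor
  · intro x y
    simp only [ContinuousLinearMap.coe_coe, outer_apply, inner_smul_left, inner_smul_right,
      inner_conj_symm]
    ring
  · intro x
    simp only [ContinuousLinearMap.reApplyInnerSelf, outer_apply, inner_smul_left]
    rw [mul_comm, Complex.mul_conj]
    simpa using Complex.normSq_nonneg _

lemma one_sub_outer_isPositive (a : H) (ha : ‖a‖ = 1) :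
    ((1 : H →L[ℂ] H) - outer a).IsPositive := by
  constructor
  · exact ContinuousLinearMap.isSelfAdjoint_iff_isSymmetric.mp
      ((IsSelfAdjoint.one _).sub (outer_isPositive a).isSelfAdjoint)
  · intro x
    simp only [ContinuousLinearMap.reApplyInnerSelf, ContinuousLinearMap.sub_apply,
      ContinuousLinearMap.one_apply, inner_sub_left, outer_apply, inner_smul_left]
    rw [mul_comm ((starRingEnd ℂ) _), Complex.mul_conj]
    simp only [map_sub]
    have h1 : RCLike.re ⟪x, x⟫_ℂ = ‖x‖ ^ 2 := inner_self_eq_norm_sq x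
    have h2 : Complex.normSq ⟪a, x⟫_ℂ = ‖⟪a, x⟫_ℂ‖ ^ 2 := (Complex.sq_norm _).symm
    have h3 : ‖⟪a, x⟫_ℂ‖ ≤ ‖x‖ := by
      simpa [ha] using norm_inner_le_norm (𝕜 := ℂ) a x
    have h4 : (0:ℝ) ≤ ‖⟪a, x⟫_ℂ‖ := by positivity
    have h2' : RCLike.re ((Complex.normSq ⟪a, x⟫_ℂ : ℂ)) = ‖⟪a, x⟫_ℂ‖ ^ 2 := by
      simp [RCLike.re_to_complex, h2, ← Complex.ofReal_pow]
    rw [h1, h2']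
    nlinarith

omit [FiniteDimensional ℂ H] in
lemma coe_smul_clm (r : ℝ) (T : H →L[ℂ] H) : (r : ℂ) • T = r • T :=
  (RCLike.real_smul_eq_coe_smul (K := ℂ) r T).symm

lemma isPositive_real_smul {c : ℝ} (hc : 0 ≤ c) {T : H →L[ℂ] H} (hT : T.IsPositive) :
    (c • T).IsPositive := by
  constructor
  · exact ContinuousLinearMap.isSelfAdjoint_iff_isSymmetric.mp
      ((IsSelfAdjoint.all c).smul hT.isSelfAdjoint)
  · intro x
    have h0 := hT.2 x
    simp only [ContinuousLinearMap.reApplyInnerSelf] at h0 ⊢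
    rw [ContinuousLinearMap.smul_apply, RCLike.real_smul_eq_coe_smul (K := ℂ),
      inner_smul_left, RCLike.conj_ofReal, RCLike.re_ofReal_mul]
    exact mul_nonneg hc h0

set_option synthInstance.maxHeartbeats 1000000 in
lemma pos_sq_eq {a b : H →L[ℂ] H} (ha : a.IsPositive) (hb : b.IsPositive)
    (h : a * a = b * b) : a = b := by
  have ha' := (ContinuousLinearMap.nonneg_iff_isPositive a).mpr ha
  have hb' := (ContinuousLinearMap.nonneg_iff_isPositive b).mpr hb
  calc a = CFC.sqrt (a * a) := (CFC.sqrt_mul_self a ha').symm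
  _ = CFC.sqrt (b * b) := by rw [h]
  _ = b := CFC.sqrt_mul_self b hb'

end Aux

lemma key_scalars (d : ℕ) (hd : 2 ≤ d) {lam : ℝ}
    (h1 : 1 / (1 - (d : ℝ)) ≤ lam) (h2 : lam ≤ 1) :
    uConst d lam * uConst d lam + 2 * (uConst d lam * (vConst lam / Real.sqrt d)) = lam ∧
    (vConst lam / Real.sqrt d) * (vConst lam / Real.sqrt d) = (1 - lam) / d ∧
    uConst d lam * (vConst lam / Real.sqrt d) + uConst d lam * (vConst lam / Real.sqrt d)
      + (d : ℝ) * ((vConst lam / Real.sqrt d) * (vConst lam / Real.sqrt d))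
      = gammaConst d lam ∧
    uConst d lam * uConst d lam * (1 / d) = (1 - gammaConst d lam) / d ∧
    0 ≤ uConst d lam + vConst lam / Real.sqrt d ∧
    0 ≤ vConst lam / Real.sqrt d := by
  have hd2 : (2 : ℝ) ≤ (d : ℝ) := by exact_mod_cast hd
  have hneg : 1 - (d : ℝ) < 0 := by linarith
  have hmul : lam * (1 - (d : ℝ)) ≤ 1 := (div_le_iff_of_neg hneg).mp h1
  have hnn : 0 ≤ 1 + ((d : ℝ) - 1) * lam := by nlinarith
  set r := Real.sqrt (1 + ((d : ℝ) - 1) * lam) with hrdef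
  set s := Real.sqrt (1 - lam) with hsdef
  set t := Real.sqrt d with htdef
  have hr2 : r ^ 2 = 1 + ((d : ℝ) - 1) * lam := Real.sq_sqrt hnn
  have hs2 : s ^ 2 = 1 - lam := Real.sq_sqrt (by linarith)
  have ht2 : t ^ 2 = (d : ℝ) := Real.sq_sqrt (by positivity)
  have ht0 : 0 < t := Real.sqrt_pos.mpr (by linarith)
  have hr0 : 0 ≤ r := Real.sqrt_nonneg _
  have hs0 : 0 ≤ s := Real.sqrt_nonneg _
  have hu : uConst d lam = (r - s) / t := by rw [uConst]; ring
  have hv : vConst lam = s := rfl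
  have hg : gammaConst d lam = (1 / (d : ℝ)) * (((d : ℝ) - 2) * (1 - lam) + 2 * s * r) := rfl
  have hd0 : (d : ℝ) ≠ 0 := by linarith
  refine ⟨?_, ?_, ?_, ?_, ?_, ?_⟩
  · rw [hu, hv]
    have e : (r - s) / t * ((r - s) / t) + 2 * ((r - s) / t * (s / t))
        = (r ^ 2 - s ^ 2) / t ^ 2 := by field_simp; ring
    rw [e, hr2, hs2, ht2]
    field_simp
    ring
  · rw [hv]
    have e : s / t * (s / t) = s ^ 2 / t ^ 2 := by field_simp
    rw [e, hs2, ht2]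
  · rw [hu, hv, hg]
    have e : (r - s) / t * (s / t) + (r - s) / t * (s / t)
        + t ^ 2 * (s / t * (s / t))
        = (2 * s * r + (t ^ 2 - 2) * s ^ 2) / t ^ 2 := by field_simp; ring
    rw [← ht2, e, hs2]
    ring
  · rw [hu, hg]
    have e : (r - s) / t * ((r - s) / t) * (1 / (d : ℝ))
        = (r ^ 2 + s ^ 2 - 2 * s * r) / (t ^ 2 * (d : ℝ)) := by field_simp; ring
    rw [e, hr2, hs2, ht2]
    field_simp
    ring
  · rw [hu, hv]
    have e : (r - s) / t + s / t = r / t := by field_simp; ring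
    rw [e]
    positivity
  · rw [hv]; positivity

set_option maxHeartbeats 2000000 in
set_option synthInstance.maxHeartbeats 1000000 in
theorem sqrt_formula_and_Luders_joint
    {H : Type*} [NormedAddCommGroup H] [InnerProductSpace ℂ H] [FiniteDimensional ℂ H]
    {Ω : Type*} [Fintype Ω] [DecidableEq Ω]
    (d : ℕ) (hd : 2 ≤ d) (hcard : Fintype.card Ω = d) (hdim : Module.finrank ℂ H = d)
    (φ ψ : OrthonormalBasis Ω ℂ H)
    (hMUB : ∀ x y : Ω, ‖⟪φ x, ψ y⟫_ℂ‖ = 1 / Real.sqrt d)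
    (lam : ℝ) (hlam : lam ∈ Set.Icc (1 / (1 - (d : ℝ))) 1)
    (S : Ω → H →L[ℂ] H)
    (hSpos : ∀ x, (S x).IsPositive)
    (hSsq : ∀ x, S x * S x =
      lam • outer (φ x) + ((1 - lam) / (d : ℝ)) • (1 : H →L[ℂ] H)) :
    (∀ x, S x = uConst d lam • outer (φ x)
        + (vConst lam / Real.sqrt d) • (1 : H →L[ℂ] H)) ∧
    IsJointObservable (fun p : Ω × Ω => S p.1 * outer (ψ p.2) * S p.1)
      (fun x => lam • outer (φ x) + ((1 - lam) / (d : ℝ)) • (1 : H →L[ℂ] H))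
      (fun y => gammaConst d lam • outer (ψ y)
        + ((1 - gammaConst d lam) / (d : ℝ)) • (1 : H →L[ℂ] H)) ∧
    (∀ y, (∑ x, S x * outer (ψ y) * S x) =
      gammaConst d lam • outer (ψ y)
        + ((1 - gammaConst d lam) / (d : ℝ)) • (1 : H →L[ℂ] H)) := by
  obtain ⟨hlam1, hlam2⟩ := hlam
  have hd2 : (2 : ℝ) ≤ (d : ℝ) := by exact_mod_cast hd
  have hd0 : (d : ℝ) ≠ 0 := by linarith
  obtain ⟨k1, k2, k3, k4, k5, k6⟩ := key_scalars d hd hlam1 hlam2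
  set u := uConst d lam with hudef
  set c := vConst lam / Real.sqrt d with hcdef
  have hφ1 : ∀ x, ⟪φ x, φ x⟫_ℂ = 1 := fun x => by
    rw [inner_self_eq_norm_sq_to_K]; simp [φ.orthonormal.1 x]
  -- Part 1 : the square-root formula
  have hT : ∀ x, S x = u • outer (φ x) + c • (1 : H →L[ℂ] H) := by
    intro x
    have hPP : outer (φ x) * outer (φ x) = outer (φ x) := outer_sq _ (hφ1 x)
    have expand : (u • outer (φ x) + c • (1 : H →L[ℂ] H)) * (u • outer (φ x) + c • 1)
        = (u * u) • (outer (φ x) * outer (φ x)) + (2 * (u * c)) • outer (φ x)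
          + (c * c) • (1 : H →L[ℂ] H) := by
      simp only [add_mul, mul_add, smul_mul_assoc, mul_smul_comm, one_mul, mul_one, smul_smul]
      module
    have hsq : (u • outer (φ x) + c • (1 : H →L[ℂ] H)) * (u • outer (φ x) + c • 1)
        = lam • outer (φ x) + ((1 - lam) / (d : ℝ)) • (1 : H →L[ℂ] H) := by
      rw [expand, hPP, ← k2, ← k1]
      module
    have hrepr : u • outer (φ x) + c • (1 : H →L[ℂ] H)
        = (u + c) • outer (φ x) + c • ((1 : H →L[ℂ] H) - outer (φ x)) := by module
    have hTpos : (u • outer (φ x) + c • (1 : H →L[ℂ] H)).IsPositive := by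
      rw [hrepr]
      exact (isPositive_real_smul k5 (outer_isPositive _)).add
        (isPositive_real_smul k6 (one_sub_outer_isPositive _ (φ.orthonormal.1 x)))
    exact pos_sq_eq (hSpos x) hTpos (by rw [hSsq x, hsq])
  -- First margin
  have hmargin1 : ∀ x, (∑ y, S x * outer (ψ y) * S x)
      = lam • outer (φ x) + ((1 - lam) / (d : ℝ)) • (1 : H →L[ℂ] H) := by
    intro x
    rw [← Finset.sum_mul, ← Finset.mul_sum, sum_outer_eq_one ψ, mul_one, hSsq x]
  -- First observable sums to one
  have hsumA : (∑ x, (lam • outer (φ x) + ((1 - lam) / (d : ℝ)) • (1 : H →L[ℂ] H))) = 1 := by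
    set_option synthInstance.maxHeartbeats 1000000 in
    rw [Finset.sum_add_distrib, ← Finset.smul_sum, sum_outer_eq_one φ, Finset.sum_const,
      Finset.card_univ, hcard, ← Nat.cast_smul_eq_nsmul ℝ d, smul_smul]
    rw [show lam • (1 : H →L[ℂ] H) + ((d : ℝ) * ((1 - lam) / (d : ℝ))) • 1
        = (lam + (d : ℝ) * ((1 - lam) / (d : ℝ))) • (1 : H →L[ℂ] H) by module]
    rw [show lam + (d : ℝ) * ((1 - lam) / (d : ℝ)) = 1 by field_simp; ring]
    exact one_smul _ _
  -- Second margin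
  have hmargin2 : ∀ y, (∑ x, S x * outer (ψ y) * S x)
      = gammaConst d lam • outer (ψ y)
        + ((1 - gammaConst d lam) / (d : ℝ)) • (1 : H →L[ℂ] H) := by
    intro y
    have hmub : ∀ x, ⟪φ x, ψ y⟫_ℂ * ⟪ψ y, φ x⟫_ℂ = (((1 : ℝ) / (d : ℝ) : ℝ) : ℂ) := by
      intro x
      rw [← inner_conj_symm (ψ y) (φ x), Complex.mul_conj]
      rw [show Complex.normSq ⟪φ x, ψ y⟫_ℂ = (1 : ℝ) / (d : ℝ) by
        rw [Complex.normSq_eq_norm_sq, hMUB x y, div_pow, one_pow, Real.sq_sqrt (by positivity)]]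
    have hPQP : ∀ x, outer (φ x) * outer (ψ y) * outer (φ x)
        = ((1 : ℝ) / (d : ℝ)) • outer (φ x) := by
      intro x
      rw [outer_conj_outer, hmub x, coe_smul_clm]
    have hexp : ∀ x, S x * outer (ψ y) * S x
        = (u * u * (1 / (d : ℝ))) • outer (φ x) + (u * c) • (outer (φ x) * outer (ψ y))
          + (u * c) • (outer (ψ y) * outer (φ x)) + (c * c) • outer (ψ y) := by
      intro x
      rw [hT x]
      have expand : (u • outer (φ x) + c • (1 : H →L[ℂ] H)) * outer (ψ y)
            * (u • outer (φ x) + c • 1)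
          = (u * u) • (outer (φ x) * outer (ψ y) * outer (φ x))
            + (u * c) • (outer (φ x) * outer (ψ y))
            + (u * c) • (outer (ψ y) * outer (φ x)) + (c * c) • outer (ψ y) := by
        simp only [add_mul, mul_add, smul_mul_assoc, mul_smul_comm, one_mul, mul_one, smul_smul]
        module
      rw [expand, hPQP x, smul_smul]
    calc (∑ x, S x * outer (ψ y) * S x)
        = ∑ x, ((u * u * (1 / (d : ℝ))) • outer (φ x)
            + (u * c) • (outer (φ x) * outer (ψ y))
            + (u * c) • (outer (ψ y) * outer (φ x)) + (c * c) • outer (ψ y)) :=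
          Finset.sum_congr rfl fun x _ => hexp x
      _ = gammaConst d lam • outer (ψ y)
            + ((1 - gammaConst d lam) / (d : ℝ)) • (1 : H →L[ℂ] H) := by
          set_option synthInstance.maxHeartbeats 1000000 in
          rw [Finset.sum_add_distrib, Finset.sum_add_distrib, Finset.sum_add_distrib,
            ← Finset.smul_sum, ← Finset.smul_sum, ← Finset.smul_sum, ← Finset.sum_mul,
            ← Finset.mul_sum, sum_outer_eq_one φ, one_mul, mul_one, Finset.sum_const,
            Finset.card_univ, hcard, ← Nat.cast_smul_eq_nsmul ℝ d, smul_smul, k4, ← k3]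
          module
  -- positivity of the candidate joint observable
  have hCpos : ∀ p : Ω × Ω, (S p.1 * outer (ψ p.2) * S p.1).IsPositive := by
    intro p
    have hadj : ContinuousLinearMap.adjoint (S p.1) = S p.1 :=
      ContinuousLinearMap.isSelfAdjoint_iff'.mp (hSpos p.1).isSelfAdjoint
    have h := (outer_isPositive (ψ p.2)).adjoint_conj (S p.1)
    rw [hadj] at h
    have : S p.1 * outer (ψ p.2) * S p.1 = S p.1 ∘L outer (ψ p.2) ∘L S p.1 := rfl
    rw [this]
    exact h
  refine ⟨hT, ⟨⟨fun p => hCpos p, ?_⟩, fun x => hmargin1 x, fun y => hmargin2 y⟩,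
    fun y => hmargin2 y⟩
  rw [Fintype.sum_prod_type]
  calc (∑ x, ∑ y, S x * outer (ψ y) * S x)
      = ∑ x, (lam • outer (φ x) + ((1 - lam) / (d : ℝ)) • (1 : H →L[ℂ] H)) :=
        Finset.sum_congr rfl fun x _ => hmargin1 x
    _ = 1 := hsumA
end
end

section
/- Let d ≥ 2 and let {φ_x : x∈Ω}, {ψ_y : y∈Ω} be two mutually unbiased bases of a d-dimensional complex Hilbert space H with |Ω| = d. For any x, y ∈ Ω, the operator Π(x,y) = (d/(d−1))·[A(x) + B(y) − (A(x)B(y) + B(y)A(x))] is the orthogonal projection of H onto the (two-dimensional) linear span of {φ_x, ψ_y}; that is, Π(x,y) is self-adjoint, Π(x,y)² = Π(x,y), and ran Π(x,y) = span{φ_x, ψ_y}. -/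
open scoped InnerProductSpace

noncomputable section

lemma outer_apply' {H : Type*} [NormedAddCommGroup H] [InnerProductSpace ℂ H] (φ v : H) :
    outer φ v = ⟪φ, v⟫_ℂ • φ := rfl

lemma outer_isSelfAdjoint {H : Type*} [NormedAddCommGroup H] [InnerProductSpace ℂ H]
    [CompleteSpace H] (φ : H) : IsSelfAdjoint (outer φ) := by
  rw [ContinuousLinearMap.isSelfAdjoint_iff_isSymmetric]
  intro u v
  simp [outer_apply', inner_smul_left, inner_smul_right]
  ring

lemma key_alg {R : Type*} [Ring R] [Algebra ℂ R] (A B : R) (s : ℂ)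
    (l1 : A*A = A) (l3 : B*B = B) (l5 : A*(B*A) = s•A) (l7 : B*(A*B) = s•B) :
    (A + B - (A*B + B*A)) * (A + B - (A*B + B*A)) = (1 - s) • (A + B - (A*B + B*A)) := by
  have l2 : ∀ X : R, A*(A*X) = A*X := fun X => by rw [← mul_assoc, l1]
  have l4 : ∀ X : R, B*(B*X) = B*X := fun X => by rw [← mul_assoc, l3]
  have l6 : ∀ X : R, A*(B*(A*X)) = s•(A*X) := fun X => by
    rw [← mul_assoc, ← mul_assoc, mul_assoc A B A, l5, smul_mul_assoc]
  have l8 : ∀ X : R, B*(A*(B*X)) = s•(B*X) := fun X => by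
    rw [← mul_assoc, ← mul_assoc, mul_assoc B A B, l7, smul_mul_assoc]
  simp only [mul_add, add_mul, mul_sub, sub_mul, mul_assoc, l1, l2, l3, l4, l5, l6, l7, l8,
    mul_smul_comm, smul_mul_assoc]
  module

theorem pi_is_projection_onto_span
    {H : Type*} [NormedAddCommGroup H] [InnerProductSpace ℂ H] [FiniteDimensional ℂ H]
    {Ω : Type*} [Fintype Ω] [DecidableEq Ω]
    (d : ℕ) (hd : 2 ≤ d) (hcard : Fintype.card Ω = d) (hdim : Module.finrank ℂ H = d)
    (φ ψ : OrthonormalBasis Ω ℂ H)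
    (hMUB : ∀ x y : Ω, ‖⟪φ x, ψ y⟫_ℂ‖ = 1 / Real.sqrt d)
    (x y : Ω) (Pi : H →L[ℂ] H)
    (hPi : Pi = ((d : ℝ) / ((d : ℝ) - 1)) • (outer (φ x) + outer (ψ y)
      - (outer (φ x) * outer (ψ y) + outer (ψ y) * outer (φ x)))) :
    IsSelfAdjoint Pi ∧ Pi * Pi = Pi ∧
      LinearMap.range (Pi : H →ₗ[ℂ] H) = Submodule.span ℂ {φ x, ψ y} := by
  set a := φ x with ha_def
  set b := ψ y with hb_def
  have hdC : (d : ℂ) ≠ 0 := by exact_mod_cast (by omega : d ≠ 0)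
  have hd1C : (d : ℂ) - 1 ≠ 0 := by
    intro h
    have : (d : ℂ) = 1 := by linear_combination h
    exact (by omega : d ≠ 1) (by exact_mod_cast this)
  have haa : ⟪a, a⟫_ℂ = 1 := by
    rw [inner_self_eq_norm_sq_to_K, φ.orthonormal.1 x]; norm_num
  have hbb : ⟪b, b⟫_ℂ = 1 := by
    rw [inner_self_eq_norm_sq_to_K, ψ.orthonormal.1 y]; norm_num
  have hab : ⟪a, b⟫_ℂ * ⟪b, a⟫_ℂ = 1 / (d:ℂ) := by
    rw [← inner_conj_symm b a, Complex.mul_conj, Complex.normSq_eq_norm_sq, hMUB x y]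
    have hd0 : (0:ℝ) ≤ (d:ℝ) := by positivity
    rw [div_pow, one_pow, Real.sq_sqrt hd0]
    push_cast; ring
  -- rewrite the real smul as a complex smul
  have hPiC : Pi = ((d : ℂ) / ((d : ℂ) - 1)) • (outer a + outer b
      - (outer a * outer b + outer b * outer a)) := by
    rw [hPi, ← Complex.coe_smul]
    norm_num
  -- operator identities
  have hA2 : outer a * outer a = outer a := by
    ext v
    simp [outer_apply', ContinuousLinearMap.mul_apply, inner_smul_right, haa, smul_smul,
      show ‖a‖ = 1 from φ.orthonormal.1 x]
  have hB2 : outer b * outer b = outer b := by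
    ext v
    simp [outer_apply', ContinuousLinearMap.mul_apply, inner_smul_right, hbb, smul_smul,
      show ‖b‖ = 1 from ψ.orthonormal.1 y]
  have hABA : outer a * (outer b * outer a) = (1/(d:ℂ)) • outer a := by
    ext v
    simp only [ContinuousLinearMap.mul_apply, ContinuousLinearMap.smul_apply, outer_apply',
      inner_smul_right, smul_smul]
    match_scalars
    linear_combination ⟪a, v⟫_ℂ * hab
  have hBAB : outer b * (outer a * outer b) = (1/(d:ℂ)) • outer b := by
    ext v
    simp only [ContinuousLinearMap.mul_apply, ContinuousLinearMap.smul_apply, outer_apply',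
      inner_smul_right, smul_smul]
    match_scalars
    linear_combination ⟪b, v⟫_ℂ * hab
  have hS2 := key_alg (outer a) (outer b) (1/(d:ℂ)) hA2 hB2 hABA hBAB
  have hidem : Pi * Pi = Pi := by
    rw [hPiC, smul_mul_smul_comm, hS2, smul_smul]
    congr 1
    field_simp
  have hsa : IsSelfAdjoint Pi := by
    rw [IsSelfAdjoint, hPiC, star_smul, star_sub, star_add, star_add, star_mul, star_mul,
      (outer_isSelfAdjoint a).star_eq, (outer_isSelfAdjoint b).star_eq]
    rw [add_comm (outer a * outer b) (outer b * outer a)]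
    congr 1
    simp [map_div₀]
  refine ⟨hsa, hidem, ?_⟩
  have hmema : a ∈ Submodule.span ℂ ({a, b} : Set H) :=
    Submodule.subset_span (by simp)
  have hmemb : b ∈ Submodule.span ℂ ({a, b} : Set H) :=
    Submodule.subset_span (by simp)
  apply le_antisymm
  · rintro w ⟨v, rfl⟩
    simp only [ContinuousLinearMap.coe_coe, hPiC, ContinuousLinearMap.smul_apply,
      ContinuousLinearMap.sub_apply, ContinuousLinearMap.add_apply,
      ContinuousLinearMap.mul_apply, outer_apply', inner_smul_right, smul_smul]
    apply Submodule.smul_mem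
    apply Submodule.sub_mem
    · exact Submodule.add_mem _ (Submodule.smul_mem _ _ hmema) (Submodule.smul_mem _ _ hmemb)
    · exact Submodule.add_mem _ (Submodule.smul_mem _ _ hmema) (Submodule.smul_mem _ _ hmemb)
  · rw [Submodule.span_le]
    rintro z hz
    simp only [Set.mem_insert_iff, Set.mem_singleton_iff] at hz
    have hPia : Pi a = a := by
      rw [hPiC]
      simp only [ContinuousLinearMap.smul_apply, ContinuousLinearMap.sub_apply,
        ContinuousLinearMap.add_apply, ContinuousLinearMap.mul_apply, outer_apply',
        inner_smul_right, haa, smul_smul]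
      match_scalars
      · rw [div_mul_eq_mul_div, div_eq_one_iff_eq hd1C]
        linear_combination (-(d:ℂ)) * hab - mul_inv_cancel₀ hdC
      · ring
    have hPib : Pi b = b := by
      rw [hPiC]
      simp only [ContinuousLinearMap.smul_apply, ContinuousLinearMap.sub_apply,
        ContinuousLinearMap.add_apply, ContinuousLinearMap.mul_apply, outer_apply',
        inner_smul_right, hbb, smul_smul]
      match_scalars
      · ring
      · rw [div_mul_eq_mul_div, div_eq_one_iff_eq hd1C]
        linear_combination (-(d:ℂ)) * hab - mul_inv_cancel₀ hdC
    rcases hz with rfl | rfl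
    · exact ⟨a, hPia⟩
    · exact ⟨b, hPib⟩
end
end
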